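/- For positive definite matrices A and X of the same size, log det X ≤ −log det A − n + Tr(AX), with equality iff X = A⁻¹. -/

import Mathlib

open Matrix Finset
open scoped MatrixOrder

section aux

variable {n : ℕ}

/-- Conjugation of a positive definite matrix by an invertible Hermitian matrix. -/
lemma posDef_conj_aux {B X : Matrix (Fin n) (Fin n) ℝ} (hX : X.PosDef)
    (hB : B.IsHermitian) (hBu : IsUnit B) : (B * X * B).PosDef := by
  refine Matrix.PosDef.of_dotProduct_mulVec_pos ?_ ?_
  · have := Matrix.isHermitian_conjTranspose_mul_mul B hX.1
    rwa [hB.eq] at this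
  · intro x hx
    have hBx : B *ᵥ x ≠ 0 := by
      intro h
      exact hx (Matrix.mulVec_injective_iff_isUnit.2 hBu (h.trans (Matrix.mulVec_zero B).symm))
    have : star x ⬝ᵥ ((B * X * B) *ᵥ x) = star (B *ᵥ x) ⬝ᵥ (X *ᵥ (B *ᵥ x)) := by
      rw [star_mulVec, hB.eq, ← Matrix.mulVec_mulVec, ← Matrix.mulVec_mulVec,
        Matrix.dotProduct_mulVec]
    rw [this]
    exact hX.dotProduct_mulVec_pos hBx

/-- A Hermitian matrix with all eigenvalues equal to 1 is the identity. -/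
lemma eq_one_of_eigenvalues_eq_one {M : Matrix (Fin n) (Fin n) ℝ} (hM : M.IsHermitian)
    (h : ∀ i, hM.eigenvalues i = 1) : M = 1 := by
  have hs := hM.spectral_theorem
  have hdiag : Matrix.diagonal (RCLike.ofReal ∘ hM.eigenvalues) = (1 : Matrix (Fin n) (Fin n) ℝ) := by
    ext i j
    by_cases hij : i = j
    · subst hij; simp [Matrix.diagonal_apply_eq, h i]
    · simp [Matrix.diagonal_apply_ne _ hij, Matrix.one_apply_ne hij]
  rw [hdiag, Unitary.conjStarAlgAut_apply, mul_one] at hs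
  rw [hs]
  exact (Matrix.mem_unitaryGroup_iff).mp hM.eigenvectorUnitary.2

lemma trace_eq_sum_eigenvalues {M : Matrix (Fin n) (Fin n) ℝ} (hM : M.IsHermitian) :
    M.trace = ∑ i, hM.eigenvalues i := by
  conv_lhs => rw [hM.spectral_theorem, Unitary.conjStarAlgAut_apply]
  rw [Matrix.trace_mul_cycle]
  rw [(Matrix.mem_unitaryGroup_iff').mp hM.eigenvectorUnitary.2, one_mul,
    Matrix.trace_diagonal]
  rfl

end aux

/-- For positive definite matrices `A` and `X`,
`log det X ≤ −log det A − n + Tr(AX)`, with equality iff `X = A⁻¹`. -/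
theorem log_det_gradient_inequality (n : ℕ)
    (A X : Matrix (Fin n) (Fin n) ℝ) (hA : A.PosDef) (hX : X.PosDef) :
    Real.log X.det ≤ -Real.log A.det - n + (A * X).trace ∧
    (Real.log X.det = -Real.log A.det - n + (A * X).trace ↔ X = A⁻¹) := by
  classical
  set B := CFC.sqrt A with hBdef
  have hBps : B.PosSemidef := (CFC.sqrt_nonneg A).posSemidef
  have hBH : B.IsHermitian := hBps.isHermitian
  have hBB : B * B = A := CFC.sqrt_mul_sqrt_self A hA.posSemidef.nonneg
  have hAdet : 0 < A.det := hA.det_pos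
  have hXdet : 0 < X.det := hX.det_pos
  have hBdet : B.det ≠ 0 := by
    intro h
    have : A.det = 0 := by rw [← hBB, Matrix.det_mul, h, mul_zero]
    exact hAdet.ne' this
  have hBu : IsUnit B := (Matrix.isUnit_iff_isUnit_det B).2 (isUnit_iff_ne_zero.2 hBdet)
  set M := B * X * B with hMdef
  have hM : M.PosDef := posDef_conj_aux hX hBH hBu
  have hMH : M.IsHermitian := hM.isHermitian
  set μ := hMH.eigenvalues with hμdef
  have hμpos : ∀ i, 0 < μ i := fun i => hM.eigenvalues_pos i
  -- det M = det A * det X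
  have hdetM : M.det = A.det * X.det := by
    rw [hMdef, Matrix.det_mul, Matrix.det_mul, ← hBB, Matrix.det_mul]
    ring
  -- trace M = trace (A * X)
  have htrM : M.trace = (A * X).trace := by
    rw [hMdef, Matrix.trace_mul_comm (B * X) B, ← Matrix.mul_assoc, hBB]
  -- det M = ∏ μ
  have hdetprod : M.det = ∏ i, μ i := by
    have := hMH.det_eq_prod_eigenvalues
    simpa using this
  -- trace M = ∑ μ
  have htrsum : M.trace = ∑ i, μ i := trace_eq_sum_eigenvalues hMH
  have hlogdetM : Real.log M.det = ∑ i, Real.log (μ i) := by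
    rw [hdetprod]
    exact Real.log_prod fun i _ => (hμpos i).ne'
  have hle : ∀ i ∈ Finset.univ, Real.log (μ i) ≤ μ i - 1 :=
    fun i _ => Real.log_le_sub_one_of_pos (hμpos i)
  have hsumle : ∑ i, Real.log (μ i) ≤ ∑ i : Fin n, (μ i - 1) := Finset.sum_le_sum hle
  have hsumsub : ∑ i : Fin n, (μ i - 1) = M.trace - n := by
    rw [Finset.sum_sub_distrib, htrsum]
    simp
  have hlogsplit : Real.log M.det = Real.log A.det + Real.log X.det := by
    rw [hdetM, Real.log_mul hAdet.ne' hXdet.ne']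
  have hineq : Real.log X.det ≤ -Real.log A.det - n + (A * X).trace := by
    have h1 : Real.log M.det ≤ M.trace - n := hlogdetM ▸ hsumsub ▸ hsumle
    rw [hlogsplit, htrM] at h1
    linarith
  refine ⟨hineq, ?_, ?_⟩
  · -- equality → X = A⁻¹
    intro heq
    have hsumeq : ∑ i, Real.log (μ i) = ∑ i : Fin n, (μ i - 1) := by
      rw [← hlogdetM, hsumsub, hlogsplit, htrM]
      linarith
    have hall : ∀ i ∈ Finset.univ, Real.log (μ i) = μ i - 1 :=
      (Finset.sum_eq_sum_iff_of_le hle).1 hsumeq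
    have hμone : ∀ i, μ i = 1 := by
      intro i
      by_contra hne
      exact (Real.log_lt_sub_one_of_pos (hμpos i) hne).ne (hall i (Finset.mem_univ i))
    have hMone : M = 1 := eq_one_of_eigenvalues_eq_one hMH hμone
    -- B * X * B = 1 → X = B⁻¹ * B⁻¹ = A⁻¹
    have hXeq : X = B⁻¹ * B⁻¹ := by
      have h1 : B⁻¹ * (B * X * B) * B⁻¹ = B⁻¹ * B⁻¹ := by
        rw [hMdef] at hMone
        rw [hMone, mul_one]
      calc X = B⁻¹ * B * X * (B * B⁻¹) := by
              rw [Matrix.nonsing_inv_mul B (isUnit_iff_ne_zero.2 hBdet), Matrix.mul_nonsing_inv B (isUnit_iff_ne_zero.2 hBdet), one_mul, mul_one]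
        _ = B⁻¹ * (B * X * B) * B⁻¹ := by noncomm_ring
        _ = B⁻¹ * B⁻¹ := h1
    rw [hXeq, ← Matrix.mul_inv_rev, hBB]
  · -- X = A⁻¹ → equality
    intro hXA
    subst hXA
    have hAXtr : (A * A⁻¹).trace = (n : ℝ) := by
      rw [Matrix.mul_nonsing_inv A (isUnit_iff_ne_zero.2 hAdet.ne'), Matrix.trace_one]
      simp
    have hdetinv : (A⁻¹).det = A.det⁻¹ := by
      rw [Matrix.det_nonsing_inv, Ring.inverse_eq_inv']
    rw [hAXtr, hdetinv, Real.log_inv]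
    ring
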